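/- Fix an integer p ≥ 3, let λ = 2cos(π/p), T = [[0,−1],[1,0]] and U = [[λ,−1],[1,0]], acting on ℝ ∪ {∞} as linear fractional transformations. Let α ∈ ℝ and 1 ≤ i ≤ p−1. Then: for 1 ≤ i ≤ p−2, one has U^{p−i+1}(0) ≤ α < U^{p−i}(0) if and only if TU^i(α) lies in [0,∞); for i = p−1, one has α ≥ U^2(0) = λ if and only if TU^{p−1}(α) lies in [0,∞). Moreover α = U^{p−i+1}(0) if and only if TU^i(α) = 0. (In each case the denominator of TU^i(α) = (−c_i α + c_{i−1})/(c_{i+1} α − c_i), with c_k = sin(kπ/p)/sin(π/p), is nonzero for α in the stated range.) -/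

import Mathlib

open Real Matrix Filter

noncomputable section

/-- `λ_p = 2 cos (π / p)`, the minimal translation length of the Hecke group `G_p`. -/
def heckeLambda (p : ℕ) : ℝ := 2 * Real.cos (Real.pi / p)

/-- The matrix `S = [[1, λ], [0, 1]]`. -/
def Smat (l : ℝ) : Matrix (Fin 2) (Fin 2) ℝ := !![1, l; 0, 1]

/-- The matrix `T = [[0, -1], [1, 0]]`. -/
def Tmat : Matrix (Fin 2) (Fin 2) ℝ := !![0, -1; 1, 0]

/-- The matrix `U = S * T = [[λ, -1], [1, 0]]`. -/
def Umat (l : ℝ) : Matrix (Fin 2) (Fin 2) ℝ := !![l, -1; 1, 0]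

/-- The matrix `S^r = [[1, rλ], [0, 1]]` for an integer exponent `r`. -/
def SmatZ (l : ℝ) (r : ℤ) : Matrix (Fin 2) (Fin 2) ℝ := !![1, (r : ℝ) * l; 0, 1]

/-- Möbius (linear fractional) action of a `2 × 2` real matrix on a real number. -/
def mobius (M : Matrix (Fin 2) (Fin 2) ℝ) (x : ℝ) : ℝ :=
  (M 0 0 * x + M 0 1) / (M 1 0 * x + M 1 1)

/-- `U^k(0)`, the image of `0` under `k` iterations of the linear fractional
transformation `U : x ↦ λ - 1/x`; as a ratio of entries of the matrix power `U^k`. -/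
def Uorbit (l : ℝ) (k : ℕ) : ℝ := ((Umat l) ^ k) 0 1 / ((Umat l) ^ k) 1 1

/-- The complete quotients `α_j` of the (negative) `λ`-continued fraction algorithm:
`α_0 = α`, `α_{j+1} = 1 / (r_j λ - α_j)` with `r_j = ⌊α_j / λ⌋ + 1`. -/
def cq (l α : ℝ) : ℕ → ℝ
  | 0 => α
  | j + 1 => 1 / (((⌊cq l α j / l⌋ : ℝ) + 1) * l - cq l α j)

/-- The partial quotients `r_j = ⌊α_j / λ⌋ + 1` of the `λ`-continued fraction of `α`. -/
def pq (l α : ℝ) (j : ℕ) : ℤ := ⌊cq l α j / l⌋ + 1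

/-- `S` as an element of `SL(2, ℝ)`. -/
def Sgen (l : ℝ) : Matrix.SpecialLinearGroup (Fin 2) ℝ :=
  ⟨!![1, l; 0, 1], by norm_num [Matrix.det_fin_two_of]⟩

/-- `T` as an element of `SL(2, ℝ)`. -/
def Tgen : Matrix.SpecialLinearGroup (Fin 2) ℝ :=
  ⟨!![0, -1; 1, 0], by norm_num [Matrix.det_fin_two_of]⟩

/-- The Hecke group `G_p`, the subgroup of `SL(2, ℝ)` generated by `S` and `T`. -/
def heckeGroup (l : ℝ) : Subgroup (Matrix.SpecialLinearGroup (Fin 2) ℝ) :=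
  Subgroup.closure {Sgen l, Tgen}

/-- `M = [[a, b], [c, d]]` fixes `α` as a linear fractional transformation, i.e.
`α` is a root of `c x² + (d - a) x - b = 0`. -/
def fixesQuad (M : Matrix.SpecialLinearGroup (Fin 2) ℝ) (α : ℝ) : Prop :=
  M.1 1 0 * α ^ 2 + (M.1 1 1 - M.1 0 0) * α - M.1 0 1 = 0

/-- `α` is a hyperbolic fixed point of the Hecke group `G(λ)`. -/
def IsHypFixedPt (l α : ℝ) : Prop :=
  ∃ M ∈ heckeGroup l, 2 < |M.1 0 0 + M.1 1 1| ∧ fixesQuad M α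

/-- `α` is a hyperbolic fixed point of `G(λ)` with Hecke conjugate `α'`
(the other root of the fixed-point quadratic). -/
def IsHypPair (l α α' : ℝ) : Prop :=
  ∃ M ∈ heckeGroup l, 2 < |M.1 0 0 + M.1 1 1| ∧ fixesQuad M α ∧ fixesQuad M α' ∧ α' ≠ α

/-- A hyperbolic fixed point is `G_p`-reduced when its complete-quotient sequence is
purely periodic. -/
def GpReduced (l β : ℝ) : Prop :=
  IsHypFixedPt l β ∧ ∃ m, 1 ≤ m ∧ cq l β m = β

/-- The map `Φ_p : [0, ∞) → [0, ∞)`: `Φ_p(x) = T U^i (x)` when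
`U^{p-i+1}(0) ≤ x < U^{p-i}(0)` for the (unique) `i` with `1 ≤ i ≤ p - 2`,
and `Φ_p(x) = x - λ` when `x ≥ λ`. -/
def Phi (p : ℕ) (l : ℝ) (x : ℝ) : ℝ :=
  @dite ℝ (∃ i : ℕ, 1 ≤ i ∧ i ≤ p - 2 ∧ Uorbit l (p - i + 1) ≤ x ∧ x < Uorbit l (p - i))
    (Classical.propDecidable _)
    (fun h => mobius (Tmat * (Umat l) ^ h.choose) x)
    (fun _ => x - l)

/-- `C_{n-j, n}`: the partial convergents computed by downward recursion,
`C_{n,n} = r_n λ` and `C_{m,n} = r_m λ - 1 / C_{m+1,n}`. -/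
def convAux (l α : ℝ) (n : ℕ) : ℕ → ℝ
  | 0 => (pq l α n : ℝ) * l
  | j + 1 => (pq l α (n - (j + 1)) : ℝ) * l - 1 / convAux l α n j

/-- The `n`-th convergent `C_n = C_{0,n}` of the `λ`-continued fraction of `α`. -/
def conv (l α : ℝ) (n : ℕ) : ℝ := convAux l α n n

/-- The word `S^{r_0} T S^{r_1} T ⋯ S^{r_n} T`. -/
def cfWord (l : ℝ) (r : ℕ → ℤ) (n : ℕ) : Matrix (Fin 2) (Fin 2) ℝ :=
  ((List.range (n + 1)).map fun j => SmatZ l (r j) * Tmat).prod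


/-- `c_k = sin(kπ/p)/sin(π/p)`, the Chebyshev-like sequence of entries of `U^k`. -/
def cc (p k : ℕ) : ℝ := Real.sin (k * (Real.pi / p)) / Real.sin (Real.pi / p)

lemma sin_theta_pos {p : ℕ} (hp : 3 ≤ p) : 0 < Real.sin (Real.pi / p) := by
  apply Real.sin_pos_of_pos_of_lt_pi
  · positivity
  · apply div_lt_self Real.pi_pos
    exact_mod_cast by omega

lemma cc_zero (p : ℕ) : cc p 0 = 0 := by simp [cc]

lemma cc_one {p : ℕ} (hp : 3 ≤ p) : cc p 1 = 1 := by
  simp [cc, div_self (sin_theta_pos hp).ne']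

lemma cc_rec {p : ℕ} (hp : 3 ≤ p) (k : ℕ) :
    cc p (k + 2) = heckeLambda p * cc p (k + 1) - cc p k := by
  have hs := (sin_theta_pos hp).ne'
  unfold cc heckeLambda
  have h1 : ((k + 2 : ℕ) : ℝ) * (Real.pi / p) = (k + 1 : ℕ) * (Real.pi / p) + Real.pi / p := by
    push_cast; ring
  have h2 : ((k : ℕ) : ℝ) * (Real.pi / p) = (k + 1 : ℕ) * (Real.pi / p) - Real.pi / p := by
    push_cast; ring
  rw [h1, h2, Real.sin_add, Real.sin_sub]
  field_simp
  ring

lemma cc_nonneg {p : ℕ} (hp : 3 ≤ p) {k : ℕ} (hk : k ≤ p) : 0 ≤ cc p k := by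
  apply div_nonneg _ (sin_theta_pos hp).le
  apply Real.sin_nonneg_of_nonneg_of_le_pi
  · positivity
  · calc (k : ℝ) * (Real.pi / p) ≤ p * (Real.pi / p) := by
          apply mul_le_mul_of_nonneg_right (by exact_mod_cast hk) (by positivity)
      _ = Real.pi := by field_simp

lemma cc_pos {p : ℕ} (hp : 3 ≤ p) {k : ℕ} (h1 : 1 ≤ k) (h2 : k ≤ p - 1) : 0 < cc p k := by
  apply div_pos _ (sin_theta_pos hp)
  apply Real.sin_pos_of_pos_of_lt_pi
  · have : (1:ℝ) ≤ k := by exact_mod_cast h1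
    have := Real.pi_pos
    have hp0 : (0:ℝ) < p := by positivity
    positivity
  · have hkp : (k : ℝ) < p := by exact_mod_cast (by omega : k < p)
    calc (k : ℝ) * (Real.pi / p) < p * (Real.pi / p) := by
          apply mul_lt_mul_of_pos_right hkp (by positivity)
      _ = Real.pi := by field_simp

lemma cc_sym {p : ℕ} (hp : 3 ≤ p) {k : ℕ} (hk : k ≤ p) : cc p (p - k) = cc p k := by
  unfold cc
  congr 1
  have hc : ((p - k : ℕ) : ℝ) = (p : ℝ) - k := by
    push_cast [Nat.cast_sub hk]; ring
  rw [hc, sub_mul, mul_div_cancel₀ _ (by positivity : (p:ℝ) ≠ 0)]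
  exact Real.sin_pi_sub _

lemma cc_det {p : ℕ} (hp : 3 ≤ p) (k : ℕ) :
    cc p (k + 1) ^ 2 - cc p k * cc p (k + 2) = 1 := by
  induction k with
  | zero => simp [cc_zero, cc_one hp]
  | succ k ih =>
    have h3 := cc_rec hp (k + 1)
    have h2 := cc_rec hp k
    linear_combination ih + cc p (k + 2) * h2 - cc p (k+1) * h3

lemma cc_two {p : ℕ} (hp : 3 ≤ p) : cc p 2 = heckeLambda p := by
  have := cc_rec hp 0
  rw [cc_zero, cc_one hp] at this
  linarith

lemma cc_p {p : ℕ} (hp : 3 ≤ p) : cc p p = 0 := by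
  unfold cc
  rw [mul_div_assoc', mul_div_cancel_left₀ _ (by positivity : (p:ℝ) ≠ 0), Real.sin_pi,
    zero_div]

lemma Umat_pow {p : ℕ} (hp : 3 ≤ p) (k : ℕ) :
    (Umat (heckeLambda p)) ^ (k + 1) =
      !![cc p (k + 2), -cc p (k + 1); cc p (k + 1), -cc p k] := by
  induction k with
  | zero =>
    rw [pow_one, Umat, cc_two hp, cc_one hp, cc_zero]
    norm_num
  | succ k ih =>
    rw [pow_succ, ih, Umat, Matrix.mul_fin_two]
    ext i j
    fin_cases i <;> fin_cases j <;>
      simp [show k+1+1 = k+2 from rfl, show k+1+2 = k+3 from rfl] <;>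
      linarith [cc_rec hp (k+1), cc_rec hp k]

lemma TU_pow {p : ℕ} (hp : 3 ≤ p) (k : ℕ) :
    Tmat * (Umat (heckeLambda p)) ^ (k + 1) =
      !![-cc p (k + 1), cc p k; cc p (k + 2), -cc p (k + 1)] := by
  rw [Umat_pow hp, Tmat, Matrix.mul_fin_two]
  ext i j
  fin_cases i <;> fin_cases j <;> simp

lemma Uorbit_eq {p : ℕ} (hp : 3 ≤ p) (m : ℕ) :
    Uorbit (heckeLambda p) (m + 1) = cc p (m + 1) / cc p m := by
  unfold Uorbit
  rw [Umat_pow hp m]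
  simp [neg_div_neg_eq]

lemma key1 (a b d α : ℝ) (ha : 0 < a) (hb : 0 ≤ b) (hd : 0 < d)
    (hdet : a ^ 2 - b * d = 1) :
    (b / a ≤ α ∧ α < a / d) ↔ (d * α + -a ≠ 0 ∧ 0 ≤ (-(a * α) + b) / (d * α + -a)) := by
  constructor
  · rintro ⟨h1, h2⟩
    rw [div_le_iff₀ ha] at h1
    rw [lt_div_iff₀ hd] at h2
    refine ⟨by nlinarith, ?_⟩
    rw [div_nonneg_iff]
    right
    constructor <;> nlinarith
  · rintro ⟨hne, hr⟩
    rw [div_nonneg_iff] at hr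
    rcases hr with ⟨hn, hde⟩ | ⟨hn, hde⟩
    · exfalso
      have h : 0 < d * α + -a := lt_of_le_of_ne hde (Ne.symm hne)
      nlinarith [mul_pos h ha, mul_nonneg hn hd.le]
    · have h : d * α + -a < 0 := lt_of_le_of_ne hde hne
      constructor
      · rw [div_le_iff₀ ha]; nlinarith
      · rw [lt_div_iff₀ hd]; nlinarith

lemma key3 (a b d α : ℝ) (ha : 0 < a) (hdet : a ^ 2 - b * d = 1) :
    α = b / a ↔ (d * α + -a ≠ 0 ∧ (-(a * α) + b) / (d * α + -a) = 0) := by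
  constructor
  · rintro rfl
    have hden : d * (b / a) + -a = -(1 / a) := by
      field_simp
      nlinarith
    have hnum : -(a * (b / a)) + b = 0 := by field_simp; ring
    refine ⟨by rw [hden]; simp [ha.ne'], by rw [hnum, zero_div]⟩
  · rintro ⟨hne, heq⟩
    rcases div_eq_zero_iff.mp heq with h | h
    · rw [eq_div_iff ha.ne']; linarith
    · exact absurd h hne

/-- for `1 ≤ i ≤ p-2`, `U^{p-i+1}(0) ≤ α < U^{p-i}(0)` iff `TU^i(α)`
lies in `[0, ∞)` (in particular, its denominator is nonzero); for `i = p-1`,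
`α ≥ λ` iff `TU^{p-1}(α)` lies in `[0, ∞)`; and `α = U^{p-i+1}(0)` iff
`TU^i(α) = 0`. -/
theorem hecke_interval_lemma (p : ℕ) (hp : 3 ≤ p) (α : ℝ) :
    (∀ i : ℕ, 1 ≤ i → i ≤ p - 2 →
      ((Uorbit (heckeLambda p) (p - i + 1) ≤ α ∧ α < Uorbit (heckeLambda p) (p - i)) ↔
        ((Tmat * (Umat (heckeLambda p)) ^ i) 1 0 * α
            + (Tmat * (Umat (heckeLambda p)) ^ i) 1 1 ≠ 0 ∧
          0 ≤ mobius (Tmat * (Umat (heckeLambda p)) ^ i) α))) ∧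
    ((heckeLambda p ≤ α) ↔
      ((Tmat * (Umat (heckeLambda p)) ^ (p - 1)) 1 0 * α
          + (Tmat * (Umat (heckeLambda p)) ^ (p - 1)) 1 1 ≠ 0 ∧
        0 ≤ mobius (Tmat * (Umat (heckeLambda p)) ^ (p - 1)) α)) ∧
    (∀ i : ℕ, 1 ≤ i → i ≤ p - 1 →
      (α = Uorbit (heckeLambda p) (p - i + 1) ↔
        ((Tmat * (Umat (heckeLambda p)) ^ i) 1 0 * α
            + (Tmat * (Umat (heckeLambda p)) ^ i) 1 1 ≠ 0 ∧
          mobius (Tmat * (Umat (heckeLambda p)) ^ i) α = 0))) := by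
  refine ⟨?_, ?_, ?_⟩
  · intro i h1 h2
    obtain ⟨k, rfl⟩ : ∃ k, i = k + 1 := ⟨i - 1, by omega⟩
    have ha : 0 < cc p (k+1) := cc_pos hp (by omega) (by omega)
    have hb : 0 ≤ cc p k := cc_nonneg hp (by omega)
    have hd : 0 < cc p (k+2) := cc_pos hp (by omega) (by omega)
    have hdet := cc_det hp k
    have hU1 : Uorbit (heckeLambda p) (p - (k+1) + 1) = cc p k / cc p (k+1) := by
      rw [Uorbit_eq hp (p - (k+1)), show p - (k+1) + 1 = p - k by omega,
          cc_sym hp (by omega : k ≤ p), cc_sym hp (by omega : k+1 ≤ p)]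
    have hU2 : Uorbit (heckeLambda p) (p - (k+1)) = cc p (k+1) / cc p (k+2) := by
      rw [show p - (k+1) = (p - (k+2)) + 1 by omega, Uorbit_eq hp (p - (k+2)),
          show p - (k+2) + 1 = p - (k+1) by omega, cc_sym hp (by omega : k+1 ≤ p),
          cc_sym hp (by omega : k+2 ≤ p)]
    rw [hU1, hU2, TU_pow hp k, mobius]
    norm_num [Matrix.cons_val_one, Matrix.head_cons, Matrix.head_fin_const]
    exact key1 _ _ _ α ha hb hd hdet
  · have e : p - 1 = (p - 2) + 1 := by omega
    rw [e, TU_pow hp (p-2), mobius]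
    rw [show p - 2 + 1 = p - 1 by omega, show p - 2 + 2 = p by omega, cc_p hp,
        cc_sym hp (by omega : 1 ≤ p), cc_one hp, cc_sym hp (by omega : 2 ≤ p), cc_two hp]
    norm_num [Matrix.cons_val_one, Matrix.head_cons, Matrix.head_fin_const]
    have hval : (-α + heckeLambda p) / (-1 : ℝ) = α - heckeLambda p := by
      field_simp
      ring
    rw [hval]
    constructor
    · intro h
      linarith
    · intro h
      linarith
  · intro i h1 h2
    obtain ⟨k, rfl⟩ : ∃ k, i = k + 1 := ⟨i - 1, by omega⟩
    have ha : 0 < cc p (k+1) := cc_pos hp (by omega) (by omega)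
    have hdet := cc_det hp k
    have hU1 : Uorbit (heckeLambda p) (p - (k+1) + 1) = cc p k / cc p (k+1) := by
      rw [Uorbit_eq hp (p - (k+1)), show p - (k+1) + 1 = p - k by omega,
          cc_sym hp (by omega : k ≤ p), cc_sym hp (by omega : k+1 ≤ p)]
    rw [hU1, TU_pow hp k, mobius]
    norm_num [Matrix.cons_val_one, Matrix.head_cons, Matrix.head_fin_const,
      -div_eq_zero_iff]
    exact key3 _ _ _ α ha hdet
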